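/- arXiv:0812.0789 — 3 statements merged into one kernel-verified Lean document; each statement's English description precedes it below -/
import Mathlib

section
/- Let δ_1, ..., δ_M be i.i.d. random variables in [0, S_max] with mean S̄ > 0, and X = Σ δ_i. If M = 2·(S_max/S̄) · max{(S_max/S̄)·ln(1/ε), 1 + N} for N ≥ 0 and 0 < ε < 1, then P(X < (1+N)·S_max) ≤ ε. -/
open MeasureTheory ProbabilityTheory

lemma hoeffD_pos {p : ℝ} (hp0 : 0 ≤ p) (u : ℝ) (hp1 : p ≤ 1) :
    0 < 1 - p + p * Real.exp u := by
  rcases hp0.eq_or_lt with h | h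
  · simp [← h]
  · have := Real.exp_pos u
    nlinarith

lemma hoeff_key {p : ℝ} (hp0 : 0 ≤ p) (hp1 : p ≤ 1) (u : ℝ) :
    1 - p + p * Real.exp u ≤ Real.exp (p * u + u ^ 2 / 8) := by
  set F : ℝ → ℝ := fun u => p * u + u ^ 2 / 8 - Real.log (1 - p + p * Real.exp u) with hF
  set F1 : ℝ → ℝ := fun u => p + u / 4 - p * Real.exp u / (1 - p + p * Real.exp u) with hF1
  have hDpos : ∀ x : ℝ, 0 < 1 - p + p * Real.exp x := fun x => hoeffD_pos hp0 x hp1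
  have hD : ∀ x : ℝ, HasDerivAt (fun u => 1 - p + p * Real.exp u) (p * Real.exp x) x := by
    intro x
    simpa using ((Real.hasDerivAt_exp x).const_mul p).const_add (1 - p)
  have hFd : ∀ x : ℝ, HasDerivAt F (F1 x) x := by
    intro x
    have h1 : HasDerivAt (fun u : ℝ => p * u + u ^ 2 / 8) (p + x / 4) x := by
      have := ((hasDerivAt_id x).const_mul p).add ((hasDerivAt_pow 2 x).div_const 8)
      convert this using 1
      rotate_left 3
      simp; ring
      all_goals rfl
    have h2 := (hD x).log (hDpos x).ne'
    exact h1.sub h2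
  have hF1d : ∀ x : ℝ, HasDerivAt F1
      (1 / 4 - (p * Real.exp x * (1 - p + p * Real.exp x) - p * Real.exp x * (p * Real.exp x)) /
        (1 - p + p * Real.exp x) ^ 2) x := by
    intro x
    have hq := ((Real.hasDerivAt_exp x).const_mul p).div (hD x) (hDpos x).ne'
    have h1 : HasDerivAt (fun u : ℝ => p + u / 4) (1 / 4) x := by
      simpa using ((hasDerivAt_id x).div_const 4).const_add p
    exact h1.sub hq
  have hF1deriv_nonneg : ∀ x : ℝ, 0 ≤ deriv F1 x := by
    intro x
    rw [(hF1d x).deriv]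
    have hD2 : (0:ℝ) < (1 - p + p * Real.exp x) ^ 2 := pow_pos (hDpos x) 2
    rw [sub_nonneg, div_le_iff₀ hD2]
    nlinarith [sq_nonneg ((1 - p) - p * Real.exp x), Real.exp_pos x]
  have hmono : Monotone F1 :=
    monotone_of_deriv_nonneg (fun x => (hF1d x).differentiableAt) hF1deriv_nonneg
  have hF10 : F1 0 = 0 := by
    simp [hF1, Real.exp_zero]
  have hFcont : Continuous F := by
    have : Differentiable ℝ F := fun x => (hFd x).differentiableAt
    exact this.continuous
  have hFnonneg : ∀ u : ℝ, 0 ≤ F u := by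
    intro u
    have hF0 : F 0 = 0 := by simp [hF]
    rcases le_total 0 u with hu | hu
    · have hmon : MonotoneOn F (Set.Ici 0) := by
        refine monotoneOn_of_deriv_nonneg (convex_Ici 0) hFcont.continuousOn
          (fun x _ => (hFd x).differentiableAt.differentiableWithinAt) ?_
        intro x hx
        rw [interior_Ici] at hx
        rw [(hFd x).deriv]
        have := hmono (le_of_lt hx)
        rw [hF10] at this
        exact this
      have := hmon (Set.self_mem_Ici) (Set.mem_Ici.2 hu) hu
      rwa [hF0] at this
    · have hant : AntitoneOn F (Set.Iic 0) := by
        refine antitoneOn_of_deriv_nonpos (convex_Iic 0) hFcont.continuousOn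
          (fun x _ => (hFd x).differentiableAt.differentiableWithinAt) ?_
        intro x hx
        rw [interior_Iic] at hx
        rw [(hFd x).deriv]
        have := hmono (le_of_lt hx)
        rw [hF10] at this
        exact this
      have := hant (Set.mem_Iic.2 hu) Set.self_mem_Iic hu
      rwa [hF0] at this
  have hlog : Real.log (1 - p + p * Real.exp u) ≤ p * u + u ^ 2 / 8 := by
    have := hFnonneg u
    simp only [hF] at this
    linarith
  calc 1 - p + p * Real.exp u = Real.exp (Real.log (1 - p + p * Real.exp u)) :=
        (Real.exp_log (hDpos u)).symm
    _ ≤ _ := Real.exp_le_exp.2 hlog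


/-- For i.i.d. `δ_i` in `[0, S_max]` with mean `S̄ > 0`, if
`M ≥ 2·(S_max/S̄)·max{(S_max/S̄)·ln(1/ε), 1 + N}` then
`P(Σδ_i < (1+N)·S_max) ≤ ε`. -/
theorem stmt_4 {Ω : Type*} [MeasurableSpace Ω] (μ : Measure Ω) [IsProbabilityMeasure μ]
    (M : ℕ) (hM : 0 < M) (Smax Sbar N ε : ℝ) (hSmax : 0 < Smax) (hSbar : 0 < Sbar)
    (hSle : Sbar ≤ Smax) (hN : 0 ≤ N) (hε : 0 < ε) (hε1 : ε < 1)
    (δ : Fin M → Ω → ℝ) (hmeas : ∀ i, Measurable (δ i))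
    (hind : iIndepFun δ μ)
    (hident : ∀ i, μ.map (δ i) = μ.map (δ ⟨0, hM⟩))
    (hbdd : ∀ i, ∀ᵐ ω ∂μ, δ i ω ∈ Set.Icc 0 Smax)
    (hmean : ∀ i, ∫ ω, δ i ω ∂μ = Sbar)
    (hMbig : 2 * (Smax / Sbar) * max ((Smax / Sbar) * Real.log (1 / ε)) (1 + N) ≤ (M : ℝ)) :
    μ {ω | (∑ i, δ i ω) < (1 + N) * Smax} ≤ ENNReal.ofReal ε := by
  classical
  set L : ℝ := Real.log (1 / ε) with hLdef
  have hL : 0 < L := Real.log_pos (by rw [lt_div_iff₀ hε]; linarith)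
  have hMpos : (0:ℝ) < (M:ℝ) := by exact_mod_cast hM
  set a : ℝ := (1 + N) * Smax with hadef
  set B : ℝ := (M:ℝ) * Sbar - a with hBdef
  -- extract the two consequences of hMbig
  have h1 : 2 * (Smax / Sbar) * ((Smax / Sbar) * L) ≤ (M:ℝ) :=
    le_trans (mul_le_mul_of_nonneg_left (le_max_left _ _) (by positivity)) hMbig
  have h2 : 2 * (Smax / Sbar) * (1 + N) ≤ (M:ℝ) :=
    le_trans (mul_le_mul_of_nonneg_left (le_max_right _ _) (by positivity)) hMbig
  have hSqL : 2 * Smax ^ 2 * L ≤ (M:ℝ) * Sbar ^ 2 := by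
    have e : 2 * (Smax / Sbar) * ((Smax / Sbar) * L) = 2 * Smax ^ 2 * L / Sbar ^ 2 := by
      field_simp
    rw [e] at h1
    exact (div_le_iff₀ (by positivity)).1 h1
  have hA : 2 * Smax * (1 + N) ≤ (M:ℝ) * Sbar := by
    have e : 2 * (Smax / Sbar) * (1 + N) = 2 * Smax * (1 + N) / Sbar := by
      first
      | (field_simp; ring)
      | field_simp
    rw [e] at h2
    exact (div_le_iff₀ hSbar).1 h2
  have hBge : (M:ℝ) * Sbar / 2 ≤ B := by
    rw [hBdef, hadef]; nlinarith
  have hBpos : 0 < B := lt_of_lt_of_le (by positivity) hBge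
  set s : ℝ := -(4 * B / ((M:ℝ) * Smax ^ 2)) with hsdef
  clear_value L a B s
  have hs : s ≤ 0 := by
    rw [hsdef, neg_nonpos]
    exact div_nonneg (by nlinarith) (by positivity)
  -- integrability
  have hintδ : ∀ i, Integrable (δ i) μ := by
    intro i
    refine (integrable_const Smax).mono' (hmeas i).aestronglyMeasurable ?_
    filter_upwards [hbdd i] with ω h
    rw [Real.norm_eq_abs, abs_of_nonneg h.1]
    exact h.2
  have hint : ∀ i, Integrable (fun ω => Real.exp (s * δ i ω)) μ := by
    intro i
    refine (integrable_const (Real.exp (|s| * Smax))).mono'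
      (((hmeas i).const_mul s).exp).aestronglyMeasurable ?_
    filter_upwards [hbdd i] with ω h
    rw [Real.norm_eq_abs, abs_of_nonneg (Real.exp_pos _).le, Real.exp_le_exp]
    calc s * δ i ω ≤ |s| * δ i ω := mul_le_mul_of_nonneg_right (le_abs_self s) h.1
      _ ≤ |s| * Smax := mul_le_mul_of_nonneg_left h.2 (abs_nonneg s)
  -- per-variable mgf bound
  set p : ℝ := Sbar / Smax with hpdef
  have hp0 : 0 ≤ p := by positivity
  have hp1 : p ≤ 1 := by rw [hpdef, div_le_one hSmax]; exact hSle
  clear_value p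
  have hmgf : ∀ i : Fin M, mgf (δ i) μ s ≤ Real.exp (s * Sbar + s ^ 2 * Smax ^ 2 / 8) := by
    intro i
    have hconv : ∀ᵐ ω ∂μ, Real.exp (s * δ i ω) ≤
        1 + (Real.exp (s * Smax) - 1) / Smax * δ i ω := by
      filter_upwards [hbdd i] with ω h
      have hb0 : (0:ℝ) ≤ δ i ω / Smax := div_nonneg h.1 hSmax.le
      have ha0 : (0:ℝ) ≤ 1 - δ i ω / Smax := by
        rw [sub_nonneg, div_le_one hSmax]; exact h.2
      have hab : (1 - δ i ω / Smax) + δ i ω / Smax = 1 := by ring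
      have hc := convexOn_exp.2 (Set.mem_univ (0:ℝ)) (Set.mem_univ (s * Smax)) ha0 hb0 hab
      simp only [smul_eq_mul, mul_zero, zero_add, Real.exp_zero, mul_one] at hc
      have e1 : δ i ω / Smax * (s * Smax) = s * δ i ω := by
        field_simp
      rw [e1] at hc
      refine le_trans hc (le_of_eq ?_)
      field_simp
      ring
    have hR : Integrable (fun ω => 1 + (Real.exp (s * Smax) - 1) / Smax * δ i ω) μ :=
      (integrable_const 1).add ((hintδ i).const_mul _)
    have hINT := integral_mono_ae (hint i) hR hconv
    have hval : ∫ ω, (1 + (Real.exp (s * Smax) - 1) / Smax * δ i ω) ∂μ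
        = 1 - p + p * Real.exp (s * Smax) := by
      rw [integral_add (integrable_const 1) ((hintδ i).const_mul _), integral_const,
        integral_const_mul, hmean i]
      simp only [measure_univ, probReal_univ, ENNReal.toReal_one, smul_eq_mul, one_mul, hpdef]
      field_simp
      ring
    have hkey := hoeff_key hp0 hp1 (s * Smax)
    have e2 : p * (s * Smax) + (s * Smax) ^ 2 / 8 = s * Sbar + s ^ 2 * Smax ^ 2 / 8 := by
      rw [hpdef]; field_simp
    calc mgf (δ i) μ s = ∫ ω, Real.exp (s * δ i ω) ∂μ := rfl
      _ ≤ 1 - p + p * Real.exp (s * Smax) := hval ▸ hINT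
      _ ≤ Real.exp (p * (s * Smax) + (s * Smax) ^ 2 / 8) := hkey
      _ = Real.exp (s * Sbar + s ^ 2 * Smax ^ 2 / 8) := by rw [e2]
  -- Chernoff bound on the sum
  have hintX : Integrable (fun ω => Real.exp (s * (∑ i, δ i) ω)) μ :=
    hind.integrable_exp_mul_sum hmeas (fun i _ => hint i)
  have hch := measure_le_le_exp_mul_mgf (μ := μ) (X := ∑ i, δ i) a hs hintX
  have hmgfX : mgf (∑ i, δ i) μ s ≤ Real.exp (s * Sbar + s ^ 2 * Smax ^ 2 / 8) ^ M := by
    rw [hind.mgf_sum hmeas Finset.univ]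
    calc ∏ i : Fin M, mgf (δ i) μ s
        ≤ ∏ _i : Fin M, Real.exp (s * Sbar + s ^ 2 * Smax ^ 2 / 8) :=
          Finset.prod_le_prod (fun i _ => mgf_nonneg) (fun i _ => hmgf i)
      _ = Real.exp (s * Sbar + s ^ 2 * Smax ^ 2 / 8) ^ M := by
          rw [Finset.prod_const, Finset.card_univ, Fintype.card_fin]
  have htoReal : (μ {ω | (∑ i, δ i) ω ≤ a}).toReal ≤ ε := by
    refine le_trans hch ?_
    have hbound : Real.exp (-s * a) * Real.exp (s * Sbar + s ^ 2 * Smax ^ 2 / 8) ^ M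
        = Real.exp (-s * a + (M:ℝ) * (s * Sbar + s ^ 2 * Smax ^ 2 / 8)) := by
      rw [← Real.exp_nat_mul, ← Real.exp_add]
    have hexp_eq : -s * a + (M:ℝ) * (s * Sbar + s ^ 2 * Smax ^ 2 / 8)
        = -(2 * B ^ 2 / ((M:ℝ) * Smax ^ 2)) := by
      have haB : a = (M:ℝ) * Sbar - B := by rw [hBdef]; ring
      rw [hsdef, haB]
      field_simp
      ring
    have hLle : L ≤ 2 * B ^ 2 / ((M:ℝ) * Smax ^ 2) := by
      rw [le_div_iff₀ (by positivity)]
      have hB2 : ((M:ℝ) * Sbar / 2) ^ 2 ≤ B ^ 2 :=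
        pow_le_pow_left₀ (by positivity) hBge 2
      have hMS : (M:ℝ) * (2 * Smax ^ 2 * L) ≤ (M:ℝ) * ((M:ℝ) * Sbar ^ 2) :=
        mul_le_mul_of_nonneg_left hSqL hMpos.le
      linarith only [hB2, hMS]
    have hεlog : Real.exp (-(2 * B ^ 2 / ((M:ℝ) * Smax ^ 2))) ≤ ε := by
      rw [← Real.exp_log hε]
      apply Real.exp_le_exp.2
      rw [hLdef, one_div, Real.log_inv] at hLle
      linarith only [hLle]
    calc Real.exp (-s * a) * mgf (∑ i, δ i) μ s
        ≤ Real.exp (-s * a) * Real.exp (s * Sbar + s ^ 2 * Smax ^ 2 / 8) ^ M := by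
          exact mul_le_mul_of_nonneg_left hmgfX (Real.exp_pos _).le
      _ = Real.exp (-(2 * B ^ 2 / ((M:ℝ) * Smax ^ 2))) := by rw [hbound, hexp_eq]
      _ ≤ ε := hεlog
  have hsub : μ {ω | (∑ i, δ i ω) < a} ≤ μ {ω | (∑ i, δ i) ω ≤ a} := by
    apply measure_mono
    intro ω hω
    simp only [Set.mem_setOf_eq, Finset.sum_apply] at *
    exact le_of_lt hω
  refine le_trans hsub ?_
  rw [← ENNReal.ofReal_toReal (measure_ne_top μ _)]
  exact ENNReal.ofReal_le_ofReal htoReal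
end

section
/- Let c_i(m) denote the number of ordered i-tuples (a_1,...,a_i) with each a_j ∈ {2^0,...,2^d} and a_1 + ... + a_i = m. Then c_i(m) is bounded above by a constant C_i depending only on i (not on d or m); in particular, in the binary expansion of m, contracting any run of more than i−1 consecutive zeros to exactly i−1 zeros does not change c_i(m). -/
open Finset

theorem stmt_8_aux : ∀ i : ℕ, ∃ C : ℕ, ∀ d m : ℕ,
    ((univ : Finset (Fin i → Fin (d + 1))).filter
        (fun f => ∑ j, 2 ^ ((f j : ℕ)) = m)).card ≤ C := by
  intro i
  induction i with
  | zero =>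
    exact ⟨1, fun d m => le_trans (Finset.card_filter_le _ _) (by simp)⟩
  | succ i ih =>
    obtain ⟨C, hC⟩ := ih
    refine ⟨(i + 2) * ((i + 2) * C), fun d m => ?_⟩
    set L := Nat.log 2 m with hL
    -- card of each piece
    have hT : ∀ j0 : Fin (i + 1), ∀ e : ℕ,
        ((univ : Finset (Fin (i + 1) → Fin (d + 1))).filter (fun f =>
          (∑ j, 2 ^ ((f j : ℕ)) = m) ∧ (f j0 : ℕ) = e)).card ≤ C := by
      intro j0 e
      refine le_trans (Finset.card_le_card_of_injOn (fun f => f ∘ j0.succAbove)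
        ?_ ?_) (hC d (m - 2 ^ e))
      · intro f hf
        simp only [coe_filter, mem_coe, Set.mem_setOf_eq, mem_filter, mem_univ, true_and] at hf ⊢
        obtain ⟨h1, h2⟩ := hf
        rw [Fin.sum_univ_succAbove (fun j => 2 ^ ((f j : ℕ))) j0] at h1
        simp only [Function.comp]
        rw [h2] at h1
        omega
      · intro f hf g hg h
        simp only [mem_coe, mem_filter, mem_univ, true_and] at hf hg
        funext x
        by_cases hx : x = j0
        · subst hx; exact Fin.ext (hf.2.trans hg.2.symm)
        · obtain ⟨k, hk⟩ := Fin.exists_succAbove_eq hx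
          have := congrFun h k
          simpa [Function.comp, hk] using this
    -- subset of biUnion
    have hsub : ((univ : Finset (Fin (i + 1) → Fin (d + 1))).filter
          (fun f => ∑ j, 2 ^ ((f j : ℕ)) = m)) ⊆
        ((univ : Finset (Fin (i + 1))) ×ˢ Finset.Icc (L - (i + 1)) L).biUnion
          (fun p => (univ : Finset (Fin (i + 1) → Fin (d + 1))).filter (fun f =>
            (∑ j, 2 ^ ((f j : ℕ)) = m) ∧ (f p.1 : ℕ) = p.2)) := by
      intro f hf
      simp only [mem_filter, mem_univ, true_and] at hf
      obtain ⟨j0, -, hj0⟩ := Finset.exists_max_image (univ : Finset (Fin (i + 1)))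
        (fun j => (f j : ℕ)) ⟨0, mem_univ 0⟩
      have hm : 0 < m := by
        rw [← hf]
        exact Finset.sum_pos (fun j _ => Nat.pow_pos (by norm_num)) ⟨j0, mem_univ j0⟩
      have hle : 2 ^ ((f j0 : ℕ)) ≤ m := by
        rw [← hf]
        exact Finset.single_le_sum (f := fun j => 2 ^ ((f j : ℕ)))
          (fun j _ => Nat.zero_le _) (mem_univ j0)
      have hub : (f j0 : ℕ) ≤ L := by
        rw [hL, Nat.le_log_iff_pow_le (by norm_num) hm.ne']
        exact hle
      have hlb : m ≤ 2 ^ ((f j0 : ℕ) + (i + 1)) := by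
        calc m = ∑ j, 2 ^ ((f j : ℕ)) := hf.symm
          _ ≤ ∑ _j : Fin (i + 1), 2 ^ ((f j0 : ℕ)) :=
              Finset.sum_le_sum (fun j _ => Nat.pow_le_pow_right (by norm_num) (hj0 j (mem_univ j)))
          _ = (i + 1) * 2 ^ ((f j0 : ℕ)) := by
              rw [Finset.sum_const, card_univ, Fintype.card_fin, smul_eq_mul]
          _ ≤ 2 ^ (i + 1) * 2 ^ ((f j0 : ℕ)) :=
              Nat.mul_le_mul_right _ Nat.lt_two_pow_self.le
          _ = 2 ^ ((f j0 : ℕ) + (i + 1)) := by rw [← pow_add, add_comm]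
      have hlb' : L ≤ (f j0 : ℕ) + (i + 1) := by
        rw [hL]
        calc Nat.log 2 m ≤ Nat.log 2 (2 ^ ((f j0 : ℕ) + (i + 1))) := Nat.log_mono_right hlb
          _ = (f j0 : ℕ) + (i + 1) := Nat.log_pow (b := 2) (by norm_num) _
      refine Finset.mem_biUnion.2 ⟨(j0, (f j0 : ℕ)), ?_, ?_⟩
      · refine Finset.mem_product.2 ⟨mem_univ _, Finset.mem_Icc.2 ⟨by omega, hub⟩⟩
      · simp [hf]
    calc _ ≤ (((univ : Finset (Fin (i + 1))) ×ˢ Finset.Icc (L - (i + 1)) L).biUnion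
          (fun p => (univ : Finset (Fin (i + 1) → Fin (d + 1))).filter (fun f =>
            (∑ j, 2 ^ ((f j : ℕ)) = m) ∧ (f p.1 : ℕ) = p.2))).card :=
            Finset.card_le_card hsub
      _ ≤ ∑ p ∈ (univ : Finset (Fin (i + 1))) ×ˢ Finset.Icc (L - (i + 1)) L,
            ((univ : Finset (Fin (i + 1) → Fin (d + 1))).filter (fun f =>
              (∑ j, 2 ^ ((f j : ℕ)) = m) ∧ (f p.1 : ℕ) = p.2)).card :=
            Finset.card_biUnion_le
      _ ≤ ((univ : Finset (Fin (i + 1))) ×ˢ Finset.Icc (L - (i + 1)) L).card * C := by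
            rw [← smul_eq_mul]
            exact Finset.sum_le_card_nsmul _ _ C (fun p _ => hT p.1 p.2)
      _ ≤ (i + 2) * ((i + 2) * C) := by
            rw [Finset.card_product, card_univ, Fintype.card_fin, Nat.card_Icc]
            have : L + 1 - (L - (i + 1)) ≤ i + 2 := by omega
            calc (i + 1) * (L + 1 - (L - (i + 1))) * C ≤ (i + 2) * (i + 2) * C :=
                  Nat.mul_le_mul_right _ (Nat.mul_le_mul (by omega) this)
              _ = (i + 2) * ((i + 2) * C) := by ring

/-- The number `c_i(m)` of ordered `i`-tuples of elements of `{2^0,…,2^d}` summing to `m`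
is bounded by a constant `C` depending only on `i` (not on `d` or `m`). -/
theorem stmt_8 (i : ℕ) (hi : 1 ≤ i) :
    ∃ C : ℕ, ∀ d m : ℕ, 0 < m →
      ((univ : Finset (Fin i → Fin (d + 1))).filter
          (fun f => ∑ j, 2 ^ ((f j : ℕ)) = m)).card ≤ C := by
  obtain ⟨C, hC⟩ := stmt_8_aux i
  exact ⟨C, fun d m _ => hC d m⟩
end

section
/- Consider the random walk on ℤ where each step adds a uniformly random element of {2^0, 2^1, ..., 2^d}. Its i-step transition probability satisfies P̂^i(u,v) = c_i(v−u)/(d+1)^i, where c_i(m) is the number of ordered ways to write m as a sum of i elements of {2^k}_{k=0}^d; hence max_{u,v} P̂^i(u,v) ≤ C_i/(d+1)^i for a constant C_i independent of d. -/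
open Finset

/-- One-step kernel of the random walk on ℤ adding a uniform element of `{2^0,…,2^d}`. -/
noncomputable def kangarooStep (d : ℕ) (u v : ℤ) : ℝ :=
  if ∃ k : Fin (d + 1), v - u = 2 ^ (k : ℕ) then 1 / (d + 1) else 0

/-- `i`-step transition probabilities of the walk. -/
noncomputable def kangarooIter (d : ℕ) : ℕ → ℤ → ℤ → ℝ
  | 0 => fun u v => if u = v then 1 else 0
  | i + 1 => fun u v => ∑' w : ℤ, kangarooIter d i u w * kangarooStep d w v

lemma pow2_inj : Function.Injective (fun k : ℕ => (2:ℤ)^k) := by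
  intro a b h
  simp only at h
  have : (2:ℕ)^a = 2^b := by exact_mod_cast h
  exact Nat.pow_right_injective (le_refl 2) this


lemma iter_succ (d i : ℕ) (u v : ℤ) :
    kangarooIter d (i+1) u v
      = ∑ k : Fin (d+1), kangarooIter d i u (v - 2^(k:ℕ)) * (1/(d+1)) := by
  have hinj : Set.InjOn (fun k : Fin (d+1) => v - 2^(k:ℕ)) (univ : Finset (Fin (d+1))) := by
    intro a _ b _ h
    simp only at h
    have : (2:ℤ)^(a:ℕ) = 2^(b:ℕ) := by omega
    have := pow2_inj this
    exact Fin.ext this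
  have hs : ∀ w : ℤ, w ∉ Finset.image (fun k : Fin (d+1) => v - 2^(k:ℕ)) univ →
      kangarooIter d i u w * kangarooStep d w v = 0 := by
    intro w hw
    have : kangarooStep d w v = 0 := by
      rw [kangarooStep, if_neg]
      rintro ⟨k, hk⟩
      exact hw (Finset.mem_image.mpr ⟨k, mem_univ _, by omega⟩)
    rw [this, mul_zero]
  show (∑' w : ℤ, kangarooIter d i u w * kangarooStep d w v) = _
  rw [tsum_eq_sum hs, Finset.sum_image hinj]
  apply Finset.sum_congr rfl
  intro k _
  congr 1
  rw [kangarooStep, if_pos ⟨k, by ring⟩]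


lemma card_succ (d i : ℕ) (u v : ℤ) :
    ((univ : Finset (Fin (i+1) → Fin (d+1))).filter
        (fun f => u + ∑ j, (2:ℤ) ^ ((f j : ℕ)) = v)).card
    = ∑ k : Fin (d+1),
      (((univ : Finset (Fin i → Fin (d+1))).filter
        (fun f => u + ∑ j, (2:ℤ) ^ ((f j : ℕ)) = v - 2^(k:ℕ))).card) := by
  rw [Finset.card_eq_sum_card_fiberwise (f := (fun f => f 0)) (t := univ) (by simp)]
  apply Finset.sum_congr rfl
  intro k _
  apply Finset.card_bij (fun f _ => Fin.tail f)
  · intro f hf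
    simp only [mem_filter, mem_univ, true_and] at hf ⊢
    obtain ⟨h1, h2⟩ := hf
    rw [Fin.sum_univ_succ] at h1
    rw [h2] at h1
    unfold Fin.tail
    omega
  · intro f hf g hg h
    simp only [mem_filter, mem_univ, true_and] at hf hg
    have := hf.2; have := hg.2
    funext j
    rcases Fin.eq_zero_or_eq_succ j with rfl | ⟨j', rfl⟩
    · rw [hf.2, hg.2]
    · exact congrFun h j'
  · intro g hg
    simp only [mem_filter, mem_univ, true_and] at hg
    refine ⟨Fin.cons k g, ?_, ?_⟩
    · simp only [mem_filter, mem_univ, true_and, Fin.sum_univ_succ, Fin.cons_zero, Fin.cons_succ]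
      constructor
      · omega
      · trivial
    · simp [Fin.tail_cons]

lemma iter_formula (d : ℕ) : ∀ (i : ℕ) (u v : ℤ),
    kangarooIter d i u v =
      (((univ : Finset (Fin i → Fin (d + 1))).filter
          (fun f => u + ∑ j, (2 : ℤ) ^ ((f j : ℕ)) = v)).card : ℝ) / (d + 1) ^ i := by
  intro i
  induction i with
  | zero =>
    intro u v
    show (if u = v then (1:ℝ) else 0) = _
    by_cases h : u = v
    · subst h
      rw [if_pos rfl]
      have : ((univ : Finset (Fin 0 → Fin (d + 1))).filter
          (fun f => u + ∑ j, (2 : ℤ) ^ ((f j : ℕ)) = u)) = univ := by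
        apply Finset.filter_true_of_mem
        intro f _
        simp
      rw [this]
      simp
    · rw [if_neg h]
      have : ((univ : Finset (Fin 0 → Fin (d + 1))).filter
          (fun f => u + ∑ j, (2 : ℤ) ^ ((f j : ℕ)) = v)) = ∅ := by
        apply Finset.filter_false_of_mem
        intro f _
        simpa using h
      rw [this]
      simp
  | succ i ih =>
    intro u v
    rw [iter_succ]
    have key : ((univ : Finset (Fin (i+1) → Fin (d+1))).filter
        (fun f => u + ∑ j, (2:ℤ) ^ ((f j : ℕ)) = v)).card
      = ∑ k : Fin (d+1),
        (((univ : Finset (Fin i → Fin (d+1))).filter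
          (fun f => u + ∑ j, (2:ℤ) ^ ((f j : ℕ)) = v - 2^(k:ℕ))).card) := by
      exact card_succ d i u v
    rw [key]
    push_cast
    rw [Finset.sum_div]
    apply Finset.sum_congr rfl
    intro k _
    rw [ih]
    have h1 : ((d:ℝ) + 1) ≠ 0 := by positivity
    have h2 : ((d:ℝ) + 1) ^ i ≠ 0 := by positivity
    rw [pow_succ, div_mul_div_comm, mul_one]

lemma valid_exp_card (d i : ℕ) (m : ℤ) :
    ((univ : Finset (Fin (d+1))).filter
      (fun e : Fin (d+1) => (2:ℤ)^(e:ℕ) ≤ m ∧ m ≤ (i+1) * 2^(e:ℕ))).card ≤ i + 1 := by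
  rcases Finset.eq_empty_or_nonempty (((univ : Finset (Fin (d+1))).filter
      (fun e : Fin (d+1) => (2:ℤ)^(e:ℕ) ≤ m ∧ m ≤ (i+1) * 2^(e:ℕ)))) with h | h
  · rw [h]; simp
  · obtain ⟨e0, he0⟩ := h
    simp only [mem_filter, mem_univ, true_and] at he0
    have hm0 : 0 < m := lt_of_lt_of_le (by positivity) he0.1
    set n := m.toNat with hn
    have hmn : (n : ℤ) = m := Int.toNat_of_nonneg hm0.le
    have hn0 : n ≠ 0 := by omega
    set L := Nat.log 2 n with hL
    calc ((univ : Finset (Fin (d+1))).filter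
      (fun e : Fin (d+1) => (2:ℤ)^(e:ℕ) ≤ m ∧ m ≤ (i+1) * 2^(e:ℕ))).card
        ≤ (Finset.Icc (L - i) L).card := by
          refine Finset.card_le_card_of_injOn (fun e => (e : ℕ)) ?_ ?_
          · intro e he
            simp only [Finset.mem_coe, mem_filter, mem_univ, true_and] at he
            obtain ⟨h1, h2⟩ := he
            have hpow : (2:ℕ)^(e:ℕ) ≤ n := by
              have : ((2:ℕ)^(e:ℕ) : ℤ) ≤ (n:ℤ) := by push_cast; omega
              exact_mod_cast this
            have hle : (e:ℕ) ≤ L := (Nat.le_log_iff_pow_le one_lt_two hn0).mpr hpow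
            have hlt : n < 2 ^ ((e:ℕ) + i + 1) := by
              have h3 : (n:ℤ) < 2^(i+1) * 2^(e:ℕ) := by
                have : (i+1 : ℤ) < 2^(i+1) := by exact_mod_cast Nat.lt_two_pow_self (n := i+1)
                have hp : (0:ℤ) < 2^(e:ℕ) := by positivity
                nlinarith [he0.1]
              have : (n:ℤ) < 2^((e:ℕ) + i + 1) := by
                rw [show (e:ℕ) + i + 1 = (i+1) + (e:ℕ) by ring, pow_add]
                exact h3
              exact_mod_cast this
            have : L < (e:ℕ) + i + 1 := Nat.log_lt_of_lt_pow hn0 hlt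
            simp only [Finset.mem_coe, Finset.mem_Icc]
            omega
          · intro a _ b _ hab
            exact Fin.ext hab
      _ ≤ i + 1 := by
          rw [Nat.card_Icc]
          omega

lemma count_bound : ∀ i : ℕ, ∃ B : ℕ, 0 < B ∧ ∀ (d : ℕ) (m : ℤ),
    (((univ : Finset (Fin i → Fin (d+1))).filter
      (fun f => ∑ j, (2:ℤ) ^ ((f j : ℕ)) = m)).card) ≤ B := by
  intro i
  induction i with
  | zero =>
    refine ⟨1, one_pos, fun d m => ?_⟩
    calc (((univ : Finset (Fin 0 → Fin (d+1))).filter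
        (fun f => ∑ j, (2:ℤ) ^ ((f j : ℕ)) = m)).card)
        ≤ (univ : Finset (Fin 0 → Fin (d+1))).card := Finset.card_filter_le _ _
      _ = 1 := by simp
  | succ i ih =>
    obtain ⟨B, hB, hbound⟩ := ih
    refine ⟨(i+1) * ((i+1+1) * B), by positivity, fun d m => ?_⟩
    set S := ((univ : Finset (Fin (i+1) → Fin (d+1))).filter
      (fun f => ∑ j, (2:ℤ) ^ ((f j : ℕ)) = m)) with hS
    have hex : ∀ f : Fin (i+1) → Fin (d+1), ∃ j, ∀ j', f j' ≤ f j :=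
      fun f => Finite.exists_max f
    set r : (Fin (i+1) → Fin (d+1)) → Fin (i+1) × Fin (d+1) :=
      fun f => ((hex f).choose, f (hex f).choose) with hr
    have hfib : S.card = ∑ p ∈ (univ : Finset (Fin (i+1) × Fin (d+1))),
        (S.filter (fun f => r f = p)).card :=
      Finset.card_eq_sum_card_fiberwise (fun x _ => mem_univ _)
    have key : ∀ p : Fin (i+1) × Fin (d+1),
        (S.filter (fun f => r f = p)).card ≤
          if ((2:ℤ)^((p.2:ℕ)) ≤ m ∧ m ≤ (i+1) * 2^((p.2:ℕ))) then B else 0 := by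
      rintro ⟨j, e⟩
      rcases Finset.eq_empty_or_nonempty (S.filter (fun f => r f = (j, e))) with h | h
      · rw [h]; simp
      · obtain ⟨f0, hf0⟩ := h
        simp only [mem_filter, mem_univ, true_and, hS, hr, Prod.mk.injEq] at hf0
        obtain ⟨hsum0, hj0, he0⟩ := hf0
        have hmax0 : ∀ j', f0 j' ≤ f0 j := by rw [← hj0]; exact (hex f0).choose_spec
        have hf0j : f0 j = e := by rw [← hj0]; exact he0
        -- cond e holds
        have hce : ((2:ℤ)^((e:ℕ)) ≤ m ∧ m ≤ (i+1) * 2^((e:ℕ))) := by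
          constructor
          · rw [← hsum0, ← hf0j]
            refine Finset.single_le_sum (f := fun j' => (2:ℤ)^((f0 j' : ℕ))) ?_ (mem_univ j)
            intro j' _
            positivity
          · rw [← hsum0]
            calc (∑ j', (2:ℤ) ^ ((f0 j' : ℕ)))
                ≤ ∑ _j' : Fin (i+1), (2:ℤ)^(e:ℕ) := by
                  apply Finset.sum_le_sum
                  intro j' _
                  apply pow_le_pow_right₀ one_le_two
                  have := hmax0 j'
                  rw [hf0j] at this
                  exact_mod_cast this
              _ = (i+1) * 2^(e:ℕ) := by
                  rw [Finset.sum_const, Finset.card_univ]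
                  simp [nsmul_eq_mul]
        rw [if_pos hce]
        -- inject into (i)-solutions of m - 2^e
        refine le_trans (Finset.card_le_card_of_injOn
          (fun f => f ∘ j.succAbove) ?_ ?_) (hbound d (m - 2^(e:ℕ)))
        · intro f hf
          simp only [Finset.mem_coe, mem_filter, mem_univ, true_and, hS, hr, Prod.mk.injEq] at hf ⊢
          obtain ⟨hsum, hjf, hef⟩ := hf
          have hfj : f j = e := by rw [← hjf]; exact hef
          have := Fin.sum_univ_succAbove (fun j' => (2:ℤ)^((f j' : ℕ))) j
          rw [hsum, hfj] at this
          simp only [Function.comp]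
          omega
        · intro f hf g hg hfg
          simp only [mem_filter, mem_univ, true_and, hS, hr, Prod.mk.injEq,
            Finset.coe_filter, Set.mem_setOf_eq] at hf hg
          have hfj : f j = e := by rw [← hf.2.1]; exact hf.2.2
          have hgj : g j = e := by rw [← hg.2.1]; exact hg.2.2
          funext j'
          rcases eq_or_ne j' j with rfl | hne
          · rw [hfj, hgj]
          · obtain ⟨k, hk⟩ := Fin.exists_succAbove_eq hne
            rw [← hk]
            exact congrFun hfg k
    calc S.card = ∑ p ∈ (univ : Finset (Fin (i+1) × Fin (d+1))),
          (S.filter (fun f => r f = p)).card := hfib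
      _ ≤ ∑ p ∈ (univ : Finset (Fin (i+1) × Fin (d+1))), (if ((2:ℤ)^((p.2:ℕ)) ≤ m ∧ m ≤ (i+1) * 2^((p.2:ℕ))) then B else 0) :=
          Finset.sum_le_sum (fun p _ => key p)
      _ = ∑ _j : Fin (i+1), ∑ e : Fin (d+1),
            (if ((2:ℤ)^((e:ℕ)) ≤ m ∧ m ≤ (i+1) * 2^((e:ℕ))) then B else 0) := by
          rw [Fintype.sum_prod_type]
      _ ≤ ∑ _j : Fin (i+1), ((i+1+1) * B) := by
          apply Finset.sum_le_sum
          intro j _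
          rw [Finset.sum_ite, Finset.sum_const, Finset.sum_const_zero, add_zero, smul_eq_mul]
          have hcard : (filter (fun e : Fin (d+1) =>
              (2:ℤ)^((e:ℕ)) ≤ m ∧ m ≤ (i+1) * 2^((e:ℕ))) univ).card ≤ i + 1 :=
            valid_exp_card d i m
          calc _ ≤ (i+1+1) * B := Nat.mul_le_mul_right B (le_trans hcard (by omega))
            _ = (i+1+1) * B := rfl
      _ = (i+1) * ((i+1+1) * B) := by
          rw [Finset.sum_const, Finset.card_univ, smul_eq_mul, Fintype.card_fin]

/-- `P̂^i(u,v) = c_i(v−u)/(d+1)^i` where `c_i(m)` counts ordered ways to write `m` as a sum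
of `i` elements of `{2^k}_{k=0}^d`; consequently `max_{u,v} P̂^i(u,v) ≤ C_i/(d+1)^i`
for a constant `C_i` independent of `d`. -/
theorem stmt_9 (i : ℕ) (hi : 1 ≤ i) :
    (∀ d : ℕ, ∀ u v : ℤ,
      kangarooIter d i u v =
        (((univ : Finset (Fin i → Fin (d + 1))).filter
            (fun f => u + ∑ j, (2 : ℤ) ^ ((f j : ℕ)) = v)).card : ℝ) / (d + 1) ^ i) ∧
    ∃ C : ℝ, 0 < C ∧ ∀ d : ℕ, ∀ u v : ℤ,
      kangarooIter d i u v ≤ C / (d + 1) ^ i := by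
  constructor
  · exact fun d u v => iter_formula d i u v
  · obtain ⟨B, hB, hbound⟩ := count_bound i
    refine ⟨B, by exact_mod_cast hB, fun d u v => ?_⟩
    rw [iter_formula d i u v]
    have hfe : ((univ : Finset (Fin i → Fin (d + 1))).filter
          (fun f => u + ∑ j, (2 : ℤ) ^ ((f j : ℕ)) = v))
        = ((univ : Finset (Fin i → Fin (d + 1))).filter
          (fun f => ∑ j, (2 : ℤ) ^ ((f j : ℕ)) = v - u)) := by
      apply Finset.filter_congr
      intro f _
      constructor <;> intro h <;> omega
    rw [hfe]
    gcongr
    exact_mod_cast hbound d (v - u)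
end
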